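/- Under the iterate hypotheses, if there exists a feasible occupancy measure q^f ∈ Δ with D(q^f) ≤ l, then the averaged estimate q̃ approximately satisfies the constraint: D(q̃) ≤ l + 2(C̄·(H+1) + ε_ol + ε_est)/B, where ε_est = (C̄ + B·D̄)·ε_oe and ε_ol = 2ε_br + 2ε_est + R/T. -/

import Mathlib

/-- ℓ¹ norm Σ_{h,s,a} |·| on functions {0,…,H} × S × A → ℝ. -/
def l1norm {S A : Type*} [Fintype S] [Fintype A] (H : ℕ) (q : ℕ → S → A → ℝ) : ℝ :=
  ∑ h ∈ Finset.range (H + 1), ∑ s : S, ∑ a : A, |q h s a|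

/-- Weighted total cost Σ_{h,s,a} q_h(s,a) c_h(s,a). -/
def costVal {S A : Type*} [Fintype S] [Fintype A] (H : ℕ) (c q : ℕ → S → A → ℝ) : ℝ :=
  ∑ h ∈ Finset.range (H + 1), ∑ s : S, ∑ a : A, q h s a * c h s a

/-- Lagrangian L(q, λ) = C(q) + λ[1]·(D(q) − l). -/
def lagrangian {S A : Type*} [Fintype S] [Fintype A] (H : ℕ) (c d : ℕ → S → A → ℝ)
    (l : ℝ) (q : ℕ → S → A → ℝ) (lam : ℝ × ℝ) : ℝ :=
  costVal H c q + lam.1 * (costVal H d q - l)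

/-- q ∈ Δ: the linear constraints defining occupancy measures of the finite-horizon MDP
with horizon H, initial state s0 and transition kernel p (where `p h s a s'` is the
probability of moving to `s'` from `s` under `a` at step `h`). -/
def IsOccupancy {S A : Type*} [Fintype S] [Fintype A] [DecidableEq S] (H : ℕ) (s0 : S)
    (p : ℕ → S → A → S → ℝ) (q : ℕ → S → A → ℝ) : Prop :=
  (∀ h ≤ H, ∀ (s : S) (a : A), 0 ≤ q h s a) ∧
  (∀ s : S, ∑ a : A, q 0 s a = if s = s0 then 1 else 0) ∧
  (∀ h < H, ∀ s : S, ∑ a : A, q (h + 1) s a = ∑ s' : S, ∑ a' : A, p h s' a' s * q h s' a')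

lemma occ_mass {S A : Type*} [Fintype S] [Fintype A] [DecidableEq S] {H : ℕ} {s0 : S}
    {p : ℕ → S → A → S → ℝ} {q : ℕ → S → A → ℝ}
    (hp : ∀ h < H, ∀ (s : S) (a : A), (∀ s' : S, 0 ≤ p h s a s') ∧ ∑ s' : S, p h s a s' = 1)
    (hq : IsOccupancy H s0 p q) : ∀ h ≤ H, ∑ s : S, ∑ a : A, q h s a = 1 := by
  intro h
  induction h with
  | zero => intro _; simp [hq.2.1]
  | succ n ih =>
    intro hle
    have hlt : n < H := hle
    calc ∑ s : S, ∑ a : A, q (n+1) s a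
        = ∑ s : S, ∑ s' : S, ∑ a' : A, p n s' a' s * q n s' a' :=
          Finset.sum_congr rfl fun s _ => hq.2.2 n hlt s
      _ = ∑ s' : S, ∑ a' : A, (∑ s : S, p n s' a' s) * q n s' a' := by
          rw [Finset.sum_comm]
          refine Finset.sum_congr rfl fun s' _ => ?_
          rw [Finset.sum_comm]
          exact Finset.sum_congr rfl fun a' _ => (Finset.sum_mul _ _ _).symm
      _ = ∑ s' : S, ∑ a' : A, q n s' a' := by
          refine Finset.sum_congr rfl fun s' _ => Finset.sum_congr rfl fun a' _ => ?_
          rw [(hp n hlt s' a').2, one_mul]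
      _ = 1 := ih (le_of_lt hlt)

lemma costVal_nonneg {S A : Type*} [Fintype S] [Fintype A] {H : ℕ} {c q : ℕ → S → A → ℝ}
    (hq : ∀ h ≤ H, ∀ (s : S) (a : A), 0 ≤ q h s a)
    (hc : ∀ h ≤ H, ∀ (s : S) (a : A), 0 ≤ c h s a) : 0 ≤ costVal H c q := by
  refine Finset.sum_nonneg fun h hh => Finset.sum_nonneg fun s _ => Finset.sum_nonneg fun a _ => ?_
  have hhH : h ≤ H := Nat.lt_succ_iff.mp (Finset.mem_range.mp hh)
  exact mul_nonneg (hq h hhH s a) (hc h hhH s a)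

lemma costVal_le {S A : Type*} [Fintype S] [Fintype A] [DecidableEq S] {H : ℕ} {s0 : S}
    {p : ℕ → S → A → S → ℝ} {c q : ℕ → S → A → ℝ} {Cbar : ℝ}
    (hp : ∀ h < H, ∀ (s : S) (a : A), (∀ s' : S, 0 ≤ p h s a s') ∧ ∑ s' : S, p h s a s' = 1)
    (hq : IsOccupancy H s0 p q)
    (hc : ∀ h ≤ H, ∀ (s : S) (a : A), 0 ≤ c h s a ∧ c h s a ≤ Cbar) :
    costVal H c q ≤ Cbar * ((H : ℝ) + 1) := by
  have : costVal H c q ≤ ∑ h ∈ Finset.range (H + 1), Cbar := by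
    refine Finset.sum_le_sum fun h hh => ?_
    have hhH : h ≤ H := Nat.lt_succ_iff.mp (Finset.mem_range.mp hh)
    calc ∑ s : S, ∑ a : A, q h s a * c h s a
        ≤ ∑ s : S, ∑ a : A, q h s a * Cbar :=
          Finset.sum_le_sum fun s _ => Finset.sum_le_sum fun a _ =>
            mul_le_mul_of_nonneg_left (hc h hhH s a).2 (hq.1 h hhH s a)
      _ = (∑ s : S, ∑ a : A, q h s a) * Cbar := by
          rw [Finset.sum_mul]; exact Finset.sum_congr rfl fun s _ => (Finset.sum_mul _ _ _).symm
      _ = Cbar := by rw [occ_mass hp hq h hhH, one_mul]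
  simpa [mul_comm, Finset.sum_const] using this

lemma costVal_lip {S A : Type*} [Fintype S] [Fintype A] {H : ℕ} {c q1 q2 : ℕ → S → A → ℝ}
    {Cbar : ℝ} (hc : ∀ h ≤ H, ∀ (s : S) (a : A), |c h s a| ≤ Cbar) :
    |costVal H c q1 - costVal H c q2| ≤ Cbar * l1norm H (fun h s a => q1 h s a - q2 h s a) := by
  have heq : costVal H c q1 - costVal H c q2 =
      ∑ h ∈ Finset.range (H + 1), ∑ s : S, ∑ a : A, (q1 h s a - q2 h s a) * c h s a := by
    simp [costVal, ← Finset.sum_sub_distrib, sub_mul]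
  rw [heq, l1norm, Finset.mul_sum]
  refine (Finset.abs_sum_le_sum_abs _ _).trans (Finset.sum_le_sum fun h hh => ?_)
  have hhH : h ≤ H := Nat.lt_succ_iff.mp (Finset.mem_range.mp hh)
  rw [Finset.mul_sum]
  refine (Finset.abs_sum_le_sum_abs _ _).trans (Finset.sum_le_sum fun s _ => ?_)
  rw [Finset.mul_sum]
  refine (Finset.abs_sum_le_sum_abs _ _).trans (Finset.sum_le_sum fun a _ => ?_)
  rw [abs_mul, mul_comm Cbar]
  exact mul_le_mul_of_nonneg_left (hc h hhH s a) (abs_nonneg _)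

lemma costVal_sum {S A : Type*} [Fintype S] [Fintype A] {H : ℕ} {c : ℕ → S → A → ℝ}
    {ι : Type*} (F : Finset ι) (f : ι → ℕ → S → A → ℝ) :
    costVal H c (fun h s a => ∑ i ∈ F, f i h s a) = ∑ i ∈ F, costVal H c (f i) := by
  classical
  induction F using Finset.induction_on with
  | empty => simp [costVal]
  | insert j F' hj ih =>
    simp only [Finset.sum_insert hj]
    rw [← ih]
    simp [costVal, add_mul, Finset.sum_add_distrib]

lemma costVal_avg {S A : Type*} [Fintype S] [Fintype A] {H : ℕ} {c : ℕ → S → A → ℝ}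
    (T : ℕ) (qhat : ℕ → ℕ → S → A → ℝ) :
    costVal H c (fun h s a => (∑ t ∈ Finset.range T, qhat t h s a) / (T : ℝ)) =
      (∑ t ∈ Finset.range T, costVal H c (qhat t)) / (T : ℝ) := by
  rw [← costVal_sum (Finset.range T) qhat]
  simp [costVal, div_mul_eq_mul_div, ← Finset.sum_div]

set_option maxHeartbeats 1000000 in
theorem stmt2 {S A : Type*} [Fintype S] [Fintype A] [DecidableEq S] [Nonempty S] [Nonempty A]
    (H : ℕ) (s0 : S) (p : ℕ → S → A → S → ℝ)
    (hp : ∀ h < H, ∀ (s : S) (a : A), (∀ s' : S, 0 ≤ p h s a s') ∧ ∑ s' : S, p h s a s' = 1)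
    (c d : ℕ → S → A → ℝ) (Cbar Dbar : ℝ)
    (hc : ∀ h ≤ H, ∀ (s : S) (a : A), 0 ≤ c h s a ∧ c h s a ≤ Cbar)
    (hd : ∀ h ≤ H, ∀ (s : S) (a : A), 0 ≤ d h s a ∧ d h s a ≤ Dbar)
    (l B : ℝ) (hB : 0 < B) (T : ℕ) (hT : 1 ≤ T)
    (εbr εoe R : ℝ) (hεbr : 0 ≤ εbr) (hεoe : 0 ≤ εoe) (hR : 0 ≤ R)
    (qt qhat : ℕ → ℕ → S → A → ℝ) (lam : ℕ → ℝ × ℝ)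
    (hqt : ∀ t < T, IsOccupancy H s0 p (qt t))
    (hqhat : ∀ t < T, l1norm H (fun h s a => qt t h s a - qhat t h s a) ≤ εoe)
    (hlam : ∀ t < T, 0 ≤ (lam t).1 ∧ 0 ≤ (lam t).2 ∧ (lam t).1 + (lam t).2 = B)
    (hbr : ∀ t < T, ∀ q : ℕ → S → A → ℝ, IsOccupancy H s0 p q →
      lagrangian H c d l (qt t) (lam t) ≤ lagrangian H c d l q (lam t) + εbr)
    (hnr : ∀ μ : ℝ × ℝ, 0 ≤ μ.1 → 0 ≤ μ.2 → μ.1 + μ.2 = B →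
      (∑ t ∈ Finset.range T, lagrangian H c d l (qhat t) μ) -
        (∑ t ∈ Finset.range T, lagrangian H c d l (qhat t) (lam t)) ≤ R)
    (qtil : ℕ → S → A → ℝ)
    (hqtil : qtil = fun h s a => (∑ t ∈ Finset.range T, qhat t h s a) / T)
    (εest εol : ℝ) (hεest : εest = (Cbar + B * Dbar) * εoe)
    (hεol : εol = 2 * εbr + 2 * εest + R / T)
    (qf : ℕ → S → A → ℝ) (hqf : IsOccupancy H s0 p qf) (hqffeas : costVal H d qf ≤ l) :
    costVal H d qtil ≤ l + 2 * (Cbar * ((H : ℝ) + 1) + εol + εest) / B := by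
  obtain ⟨s⟩ := ‹Nonempty S›
  obtain ⟨a⟩ := ‹Nonempty A›
  have hCbar : 0 ≤ Cbar := le_trans (hc 0 (Nat.zero_le H) s a).1 (hc 0 (Nat.zero_le H) s a).2
  have hDbar : 0 ≤ Dbar := le_trans (hd 0 (Nat.zero_le H) s a).1 (hd 0 (Nat.zero_le H) s a).2
  have hεest0 : 0 ≤ εest := by
    rw [hεest]; positivity
  have hT' : (0 : ℝ) < T := by exact_mod_cast hT
  set M : ℝ := Cbar * ((H : ℝ) + 1) with hM
  have hM0 : 0 ≤ M := by positivity
  have hcabs : ∀ h ≤ H, ∀ (s : S) (a : A), |c h s a| ≤ Cbar := fun h hh s a => by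
    rw [abs_of_nonneg (hc h hh s a).1]; exact (hc h hh s a).2
  have hdabs : ∀ h ≤ H, ∀ (s : S) (a : A), |d h s a| ≤ Dbar := fun h hh s a => by
    rw [abs_of_nonneg (hd h hh s a).1]; exact (hd h hh s a).2
  -- per-iterate bounds
  have key : ∀ t < T, lagrangian H c d l (qhat t) (lam t) ≤ M + εbr + εest ∧
      -εest ≤ costVal H c (qhat t) := by
    intro t ht
    have hCdiff : |costVal H c (qhat t) - costVal H c (qt t)| ≤ Cbar * εoe := by
      rw [abs_sub_comm]
      exact (costVal_lip hcabs).trans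
        (mul_le_mul_of_nonneg_left (hqhat t ht) hCbar)
    have hDdiff : |costVal H d (qhat t) - costVal H d (qt t)| ≤ Dbar * εoe := by
      rw [abs_sub_comm]
      exact (costVal_lip hdabs).trans
        (mul_le_mul_of_nonneg_left (hqhat t ht) hDbar)
    obtain ⟨hC1, hC2⟩ := abs_le.mp hCdiff
    obtain ⟨hD1, hD2⟩ := abs_le.mp hDdiff
    obtain ⟨hl1, hl2, hl3⟩ := hlam t ht
    have hlB : (lam t).1 ≤ B := by linarith
    -- best response bound
    have hbr' := hbr t ht qf hqf
    have hCqf : costVal H c qf ≤ M := costVal_le hp hqf hc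
    have hneg : (lam t).1 * (costVal H d qf - l) ≤ 0 :=
      mul_nonpos_of_nonneg_of_nonpos hl1 (by linarith)
    have hLqt : lagrangian H c d l (qt t) (lam t) ≤ M + εbr := by
      have : lagrangian H c d l qf (lam t) ≤ M := by
        unfold lagrangian; linarith
      linarith
    have hCqt : 0 ≤ costVal H c (qt t) :=
      costVal_nonneg (hqt t ht).1 (fun h hh s a => (hc h hh s a).1)
    constructor
    · have hexp : lagrangian H c d l (qhat t) (lam t) - lagrangian H c d l (qt t) (lam t) =
          (costVal H c (qhat t) - costVal H c (qt t)) +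
          (lam t).1 * (costVal H d (qhat t) - costVal H d (qt t)) := by
        unfold lagrangian; ring
      have hDe : 0 ≤ Dbar * εoe := by positivity
      have h2 : (lam t).1 * (costVal H d (qhat t) - costVal H d (qt t)) ≤ B * (Dbar * εoe) := by
        calc (lam t).1 * (costVal H d (qhat t) - costVal H d (qt t))
            ≤ (lam t).1 * (Dbar * εoe) := mul_le_mul_of_nonneg_left hD2 hl1
          _ ≤ B * (Dbar * εoe) := mul_le_mul_of_nonneg_right hlB hDe
      have : lagrangian H c d l (qhat t) (lam t) - lagrangian H c d l (qt t) (lam t) ≤ εest := by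
        rw [hexp, hεest]; nlinarith
      linarith
    · have : Cbar * εoe ≤ εest := by rw [hεest]; nlinarith
      linarith
  -- sum of Lagrangians of qhat bound
  have hsumL : ∑ t ∈ Finset.range T, lagrangian H c d l (qhat t) (lam t) ≤
      (T : ℝ) * (M + εbr + εest) := by
    calc ∑ t ∈ Finset.range T, lagrangian H c d l (qhat t) (lam t)
        ≤ ∑ t ∈ Finset.range T, (M + εbr + εest) :=
          Finset.sum_le_sum fun t ht => (key t (Finset.mem_range.mp ht)).1
      _ = (T : ℝ) * (M + εbr + εest) := by simp [Finset.sum_const]; ring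
  -- no-regret with μ = (B, 0)
  have hnrB := hnr (B, 0) (le_of_lt hB) le_rfl (by simp)
  have hexpand : ∑ t ∈ Finset.range T, lagrangian H c d l (qhat t) (B, 0) =
      (∑ t ∈ Finset.range T, costVal H c (qhat t)) +
      B * ((∑ t ∈ Finset.range T, costVal H d (qhat t)) - (T : ℝ) * l) := by
    unfold lagrangian
    rw [Finset.sum_add_distrib, ← Finset.mul_sum, Finset.sum_sub_distrib]
    simp [mul_sub, Finset.sum_const, mul_comm]
  -- averages
  have hCavg : costVal H c qtil = (∑ t ∈ Finset.range T, costVal H c (qhat t)) / (T : ℝ) := by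
    rw [hqtil]; exact costVal_avg T qhat
  have hDavg : costVal H d qtil = (∑ t ∈ Finset.range T, costVal H d (qhat t)) / (T : ℝ) := by
    rw [hqtil]; exact costVal_avg T qhat
  have hCsum : (∑ t ∈ Finset.range T, costVal H c (qhat t)) = (T : ℝ) * costVal H c qtil := by
    rw [hCavg]; field_simp
  have hDsum : (∑ t ∈ Finset.range T, costVal H d (qhat t)) = (T : ℝ) * costVal H d qtil := by
    rw [hDavg]; field_simp
  -- lower bound on C(qtil)
  have hClow : -εest ≤ costVal H c qtil := by
    have : -((T : ℝ) * εest) ≤ ∑ t ∈ Finset.range T, costVal H c (qhat t) := by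
      calc -((T : ℝ) * εest) = ∑ t ∈ Finset.range T, (-εest) := by
            simp [Finset.sum_const, mul_comm]
        _ ≤ _ := Finset.sum_le_sum fun t ht => (key t (Finset.mem_range.mp ht)).2
    rw [hCsum] at this
    nlinarith
  -- combine
  have hmain : (T : ℝ) * costVal H c qtil + B * ((T : ℝ) * costVal H d qtil - (T : ℝ) * l) ≤
      (T : ℝ) * (M + εbr + εest) + R := by
    rw [← hCsum, ← hDsum, ← hexpand]
    linarith
  have hRT : (T : ℝ) * (R / T) = R := by field_simp
  have h1 : costVal H c qtil + B * (costVal H d qtil - l) ≤ M + εbr + εest + R / T := by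
    refine le_of_mul_le_mul_left ?_ hT'
    calc (T : ℝ) * (costVal H c qtil + B * (costVal H d qtil - l))
        = (T : ℝ) * costVal H c qtil + B * ((T : ℝ) * costVal H d qtil - (T : ℝ) * l) := by ring
      _ ≤ (T : ℝ) * (M + εbr + εest) + R := hmain
      _ = (T : ℝ) * (M + εbr + εest + R / T) := by field_simp
  have hRT0 : 0 ≤ R / T := div_nonneg hR hT'.le
  have h2 : B * (costVal H d qtil - l) ≤ 2 * (M + εol + εest) := by
    rw [hεol]; linarith
  have h3 : B * (costVal H d qtil - l) / B ≤ 2 * (M + εol + εest) / B :=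
    div_le_div_of_nonneg_right h2 hB.le
  have hcanc : B * (costVal H d qtil - l) / B = costVal H d qtil - l :=
    mul_div_cancel_left₀ _ (ne_of_gt hB)
  linarith [h3, hcanc]
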